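/- Let ρ : L^∞ → ℝ be any law invariant convex risk measure, let F, G_1, …, G_e : 𝒳 → ℝ be bounded measurable functions, let 𝒢 ⊆ ℝ^e be an arbitrary set, and define π^ν(F) := inf_{g∈𝒢} ρ^ν(F + g·G) ∈ [−∞,∞) for probability measures ν on 𝒳. Assume (μ, G) is non-degenerate, i.e. for every g ∈ ℝ^e \ {0} one has μ({x ∈ 𝒳 : g·G(x) < 0}) > 0. If π^μ(F) ∈ ℝ and E[ |π^μ(F) − π^{μ_N}(F)| ] → 0 as N → ∞, then the set 𝒢 is bounded. -/

import Mathlib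

open MeasureTheory ProbabilityTheory Filter Real
open scoped ENNReal NNReal

/-- The empirical measure `μ_N = (1/N) ∑_{n<N} δ_{X_n(ω)}`. -/
noncomputable def empMeas {𝒳 Ω : Type*} [MeasurableSpace 𝒳] (X : ℕ → Ω → 𝒳) (N : ℕ) (ω : Ω) :
    Measure 𝒳 :=
  (N : ℝ≥0∞)⁻¹ • ∑ n ∈ Finset.range N, Measure.dirac (X n ω)

/-- The hedged position `F + g·G`. -/
noncomputable def payoff {𝒳 : Type*} {e : ℕ} (F : 𝒳 → ℝ) (Gf : Fin e → 𝒳 → ℝ)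
    (g : Fin e → ℝ) (x : 𝒳) : ℝ :=
  F x + ∑ i, g i * Gf i x

/-- An extended real that is below every real is `⊥`. -/
lemma ereal_eq_bot_of_forall_le (a : EReal) (h : ∀ c : ℝ, a ≤ (c : EReal)) : a = ⊥ := by
  induction a using EReal.rec with
  | bot => rfl
  | coe r =>
      exfalso
      have := h (r - 1)
      rw [EReal.coe_le_coe_iff] at this
      linarith
  | top =>
      exfalso
      have := h 0
      exact absurd this (by simp)

/-- if the (possibly `-∞`-valued) hedged risk
`π^ν(F) = inf_{g∈𝒢} ρ^ν(F + g·G)` is finite under `μ` and the empirical estimation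
error converges to `0` in expectation, then the set of admissible strategies `𝒢`
must be bounded.  Here `(μ, G)` is non-degenerate: `μ(g·G < 0) > 0` for `g ≠ 0`. -/
theorem admissible_strategies_must_be_bounded
    {𝒳 Ω Ω' : Type*} [MeasurableSpace 𝒳] [MeasurableSpace Ω] [MeasurableSpace Ω']
    (P : Measure Ω) [IsProbabilityMeasure P]
    (μ : Measure 𝒳) [IsProbabilityMeasure μ]
    (P' : Measure Ω') [IsProbabilityMeasure P']
    (X : ℕ → Ω → 𝒳)
    (hXmeas : ∀ n, Measurable (X n))
    (hXlaw : ∀ n, Measure.map (X n) P = μ)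
    (hXindep : iIndepFun X P)
    {e : ℕ} (F : 𝒳 → ℝ) (Gf : Fin e → 𝒳 → ℝ)
    (hFmeas : Measurable F) (hFbdd : ∃ C, ∀ x, |F x| ≤ C)
    (hGmeas : ∀ i, Measurable (Gf i)) (hGbdd : ∀ i, ∃ C, ∀ x, |Gf i x| ≤ C)
    (𝒢 : Set (Fin e → ℝ))
    (ρ : (Ω' → ℝ) → ℝ) (ρm : Measure ℝ → ℝ)
    -- ρ is a law invariant convex risk measure on L^∞(Ω', P'):
    (hρ_cash : ∀ Y : Ω' → ℝ, Measurable Y → (∃ C, ∀ x, |Y x| ≤ C) →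
      ∀ m : ℝ, ρ (fun x => Y x + m) = ρ Y + m)
    (hρ_zero : ρ (fun _ => 0) = 0)
    (hρ_mono : ∀ Y Z : Ω' → ℝ, Measurable Y → Measurable Z →
      (∃ C, ∀ x, |Y x| ≤ C) → (∃ C, ∀ x, |Z x| ≤ C) →
      (∀ᵐ x ∂P', Y x ≤ Z x) → ρ Y ≤ ρ Z)
    (hρ_convex : ∀ Y Z : Ω' → ℝ, Measurable Y → Measurable Z →
      (∃ C, ∀ x, |Y x| ≤ C) → (∃ C, ∀ x, |Z x| ≤ C) →
      ∀ t : ℝ, t ∈ Set.Icc (0:ℝ) 1 →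
        ρ (fun x => t * Y x + (1 - t) * Z x) ≤ t * ρ Y + (1 - t) * ρ Z)
    (hρ_law : ∀ Y Z : Ω' → ℝ, Measurable Y → Measurable Z →
      (∃ C, ∀ x, |Y x| ≤ C) → (∃ C, ∀ x, |Z x| ≤ C) →
      Measure.map Y P' = Measure.map Z P' → ρ Y = ρ Z)
    -- ρm is the factorization of ρ through laws:
    (hρm : ∀ Y : Ω' → ℝ, Measurable Y → (∃ C, ∀ x, |Y x| ≤ C) →
      ρm (Measure.map Y P') = ρ Y)
    -- (Ω', P') is atomless standard: every law on ℝ is realized: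
    (hstd : ∀ ν : Measure ℝ, IsProbabilityMeasure ν →
      ∃ Y : Ω' → ℝ, Measurable Y ∧ Measure.map Y P' = ν)
    -- (μ, G) is non-degenerate:
    (hnondeg : ∀ g : Fin e → ℝ, g ≠ 0 → μ {x | (∑ i, g i * Gf i x) < 0} ≠ 0)
    -- π^μ(F) is a real number:
    (hπreal : ∃ r : ℝ,
      (⨅ g ∈ 𝒢, ((ρm (Measure.map (payoff F Gf g) μ) : ℝ) : EReal)) = (r : EReal))
    -- the estimation error converges to 0 in expectation:
    (hconv : Tendsto
      (fun N : ℕ => ∫⁻ ω,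
        ((⨅ g ∈ 𝒢, ((ρm (Measure.map (payoff F Gf g) μ) : ℝ) : EReal)) -
          (⨅ g ∈ 𝒢,
            ((ρm (Measure.map (payoff F Gf g) (empMeas X N ω)) : ℝ) : EReal))).abs ∂P)
      atTop (nhds 0)) :
    Bornology.IsBounded 𝒢 := by
  by_contra hunb
  -- the underlying space is nonempty (it carries a probability measure)
  have hXne : Nonempty 𝒳 := by
    rcases isEmpty_or_nonempty 𝒳 with h | h
    · exfalso
      have h1 : μ Set.univ = 1 := measure_univ
      rw [Set.univ_eq_empty_iff.mpr h, measure_empty] at h1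
      exact zero_ne_one h1
    · exact h
  obtain ⟨CF, hCF⟩ := hFbdd
  choose C hC using hGbdd
  have hC0 : ∀ i, 0 ≤ C i := fun i => le_trans (abs_nonneg _) (hC i (Classical.arbitrary 𝒳))
  have hCF0 : 0 ≤ CF := le_trans (abs_nonneg _) (hCF (Classical.arbitrary 𝒳))
  -- a sequence in 𝒢 with norms going to infinity
  have hseq : ∀ k : ℕ, ∃ g, g ∈ 𝒢 ∧ (k : ℝ) < ‖g‖ := by
    intro k
    by_contra h
    push_neg at h
    exact hunb (isBounded_iff_forall_norm_le.mpr ⟨k, fun g hg => h g hg⟩)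
  choose g hg𝒢 hgnorm using hseq
  have hgpos : ∀ k, 0 < ‖g k‖ := fun k => lt_of_le_of_lt (Nat.cast_nonneg k) (hgnorm k)
  set u : ℕ → (Fin e → ℝ) := fun k => ‖g k‖⁻¹ • g k with hu
  have husph : ∀ k, u k ∈ Metric.sphere (0 : Fin e → ℝ) 1 := by
    intro k
    rw [mem_sphere_zero_iff_norm]
    simp only [hu, norm_smul, norm_inv, norm_norm]
    exact inv_mul_cancel₀ (hgpos k).ne'
  obtain ⟨uL, huLsph, φ, hφ, hconv'⟩ :=
    (isCompact_sphere (0 : Fin e → ℝ) 1).tendsto_subseq husph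
  have huLnorm : ‖uL‖ = 1 := mem_sphere_zero_iff_norm.mp huLsph
  have huL : uL ≠ 0 := by
    intro h
    rw [h, norm_zero] at huLnorm
    exact zero_ne_one huLnorm
  -- find δ > 0 with μ {uL·G ≤ -δ} > 0
  have hAδ : ∃ δ : ℝ, 0 < δ ∧ μ {x | ∑ i, uL i * Gf i x ≤ -δ} ≠ 0 := by
    by_contra h
    push_neg at h
    apply hnondeg uL huL
    have hsub : {x | ∑ i, uL i * Gf i x < 0} ⊆
        ⋃ n : ℕ, {x | ∑ i, uL i * Gf i x ≤ -(1 / ((n : ℝ) + 1))} := by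
      intro x hx
      obtain ⟨n, hn⟩ := exists_nat_one_div_lt (K := ℝ) (neg_pos.mpr hx)
      exact Set.mem_iUnion.mpr ⟨n, by simp only [Set.mem_setOf_eq]; linarith⟩
    exact measure_mono_null hsub (measure_iUnion_null fun n => h _ (by positivity))
  obtain ⟨δ, hδ, hA⟩ := hAδ
  set A : Set 𝒳 := {x | ∑ i, uL i * Gf i x ≤ -δ} with hAdef
  have hsummeas : ∀ v : Fin e → ℝ, Measurable fun x => ∑ i, v i * Gf i x := fun v =>
    Finset.measurable_sum _ fun i _ => (hGmeas i).const_mul (v i)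
  have hAmeas : MeasurableSet A := measurableSet_le (hsummeas uL) measurable_const
  obtain ⟨x₀, hx₀⟩ := nonempty_of_measure_ne_zero hA
  set CG : ℝ := ∑ i, C i with hCG
  have hCG0 : 0 ≤ CG := Finset.sum_nonneg fun i _ => hC0 i
  -- the key claim: elements of 𝒢 make the payoff arbitrarily small on A
  have key : ∀ c : ℝ, ∃ g', g' ∈ 𝒢 ∧ ∀ x ∈ A, payoff F Gf g' x ≤ c := by
    intro c
    have hε : (0:ℝ) < δ / (2 * (CG + 1)) := by positivity
    obtain ⟨K, hK⟩ := (Metric.tendsto_atTop.mp hconv') _ hε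
    obtain ⟨k, hk1, hk2⟩ : ∃ k, K ≤ k ∧ 2 * (CF - c) / δ ≤ (k : ℝ) := by
      obtain ⟨m, hm⟩ := exists_nat_ge (2 * (CF - c) / δ)
      exact ⟨max K m, le_max_left _ _, hm.trans (Nat.cast_le.mpr (le_max_right _ _))⟩
    refine ⟨g (φ k), hg𝒢 _, fun x hx => ?_⟩
    set v : Fin e → ℝ := u (φ k) with hv
    have hdist : ‖v - uL‖ < δ / (2 * (CG + 1)) := by
      have := hK k hk1
      rwa [Function.comp_apply, dist_eq_norm] at this
    have hvG : ∑ i, v i * Gf i x ≤ -(δ / 2) := by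
      have h1 : ∑ i, v i * Gf i x
          = (∑ i, uL i * Gf i x) + ∑ i, (v i - uL i) * Gf i x := by
        rw [← Finset.sum_add_distrib]
        exact Finset.sum_congr rfl fun i _ => by ring
      have h2 : ∑ i, (v i - uL i) * Gf i x ≤ δ / 2 := by
        have hstep : ∑ i, (v i - uL i) * Gf i x ≤ ∑ i, ‖v - uL‖ * C i := by
          refine Finset.sum_le_sum fun i _ => ?_
          calc (v i - uL i) * Gf i x ≤ |(v i - uL i) * Gf i x| := le_abs_self _
            _ = |v i - uL i| * |Gf i x| := abs_mul _ _
            _ ≤ ‖v - uL‖ * C i := by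
                refine mul_le_mul ?_ (hC i x) (abs_nonneg _) (norm_nonneg _)
                have := norm_le_pi_norm (v - uL) i
                simpa using this
        have hstep2 : ∑ i, ‖v - uL‖ * C i = ‖v - uL‖ * CG := by rw [← Finset.mul_sum]
        have hstep3 : ‖v - uL‖ * CG ≤ (δ / (2 * (CG + 1))) * CG :=
          mul_le_mul_of_nonneg_right hdist.le hCG0
        have hstep4 : (δ / (2 * (CG + 1))) * CG ≤ δ / 2 := by
          rw [div_mul_eq_mul_div, div_le_div_iff₀ (by positivity) (by positivity)]
          nlinarith
        linarith
      have hxA : ∑ i, uL i * Gf i x ≤ -δ := hx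
      linarith
    have hnormid : ∀ i, g (φ k) i = ‖g (φ k)‖ * v i := by
      intro i
      have hne := (hgpos (φ k)).ne'
      simp only [hv, hu, Pi.smul_apply, smul_eq_mul]
      field_simp
    have hφk : (φ k : ℝ) ≤ ‖g (φ k)‖ := (hgnorm (φ k)).le
    have hkφ : (k : ℝ) ≤ (φ k : ℝ) := Nat.cast_le.mpr hφ.le_apply
    have hsum : ∑ i, g (φ k) i * Gf i x = ‖g (φ k)‖ * ∑ i, v i * Gf i x := by
      rw [Finset.mul_sum]
      exact Finset.sum_congr rfl fun i _ => by rw [hnormid i]; ring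
    have hFx := (abs_le.mp (hCF x)).2
    have h3 : ‖g (φ k)‖ * ∑ i, v i * Gf i x ≤ ‖g (φ k)‖ * (-(δ / 2)) :=
      mul_le_mul_of_nonneg_left hvG (norm_nonneg _)
    have h4 : ‖g (φ k)‖ * (-(δ / 2)) ≤ (φ k : ℝ) * (-(δ / 2)) := by nlinarith
    have h5 : 2 * (CF - c) ≤ (k : ℝ) * δ := by
      rw [div_le_iff₀ hδ] at hk2; linarith
    have h6 : (k : ℝ) * δ ≤ (φ k : ℝ) * δ := by nlinarith
    have : payoff F Gf (g (φ k)) x = F x + ∑ i, g (φ k) i * Gf i x := rfl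
    rw [this, hsum]
    nlinarith
  -- the structural lemma: if all N samples lie in A, the empirical inf is ⊥
  have hbot : ∀ N : ℕ, 1 ≤ N → ∀ ω : Ω, (∀ n ∈ Finset.range N, X n ω ∈ A) →
      (⨅ g' ∈ 𝒢, ((ρm (Measure.map (payoff F Gf g') (empMeas X N ω)) : ℝ) : EReal)) = ⊥ := by
    intro N hN ω hω
    have hNne : (N : ℝ≥0∞) ≠ 0 := Nat.cast_ne_zero.mpr (by omega)
    have hNtop : (N : ℝ≥0∞) ≠ ⊤ := ENNReal.natCast_ne_top N
    have hprob : IsProbabilityMeasure (empMeas X N ω) := by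
      constructor
      rw [empMeas, Measure.smul_apply, Measure.finset_sum_apply]
      simp only [Measure.dirac_apply_of_mem (Set.mem_univ _), Finset.sum_const,
        Finset.card_range, smul_eq_mul, nsmul_eq_mul, mul_one]
      exact ENNReal.inv_mul_cancel hNne hNtop
    apply ereal_eq_bot_of_forall_le
    intro c
    obtain ⟨g', hg'𝒢, hg'⟩ := key c
    refine le_trans (iInf₂_le g' hg'𝒢) ?_
    rw [EReal.coe_le_coe_iff]
    set B : ℝ := CF + ∑ i, |g' i| * C i with hB
    have hpb : ∀ x, -B ≤ payoff F Gf g' x ∧ payoff F Gf g' x ≤ B := by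
      intro x
      have h1 : |payoff F Gf g' x| ≤ B := by
        rw [payoff]
        calc |F x + ∑ i, g' i * Gf i x| ≤ |F x| + |∑ i, g' i * Gf i x| := abs_add_le _ _
          _ ≤ CF + ∑ i, |g' i| * C i := by
              refine add_le_add (hCF x) ?_
              calc |∑ i, g' i * Gf i x| ≤ ∑ i, |g' i * Gf i x| :=
                    Finset.abs_sum_le_sum_abs _ _
                _ ≤ ∑ i, |g' i| * C i := Finset.sum_le_sum fun i _ => by
                    rw [abs_mul]
                    exact mul_le_mul_of_nonneg_left (hC i x) (abs_nonneg _)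
      exact abs_le.mp h1
    have hBc : -B ≤ c := le_trans (hpb x₀).1 (hg' x₀ hx₀)
    have hpm : Measurable (payoff F Gf g') := by
      have : payoff F Gf g' = fun x => F x + ∑ i, g' i * Gf i x := rfl
      rw [this]
      exact hFmeas.add (hsummeas g')
    -- the empirical law of the payoff is supported in [-B, c]
    have hνnull : (Measure.map (payoff F Gf g') (empMeas X N ω)) (Set.Icc (-B) c)ᶜ = 0 := by
      rw [Measure.map_apply hpm measurableSet_Icc.compl]
      rw [empMeas, Measure.smul_apply, Measure.finset_sum_apply]
      have hz : ∀ n ∈ Finset.range N,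
          Measure.dirac (X n ω) (payoff F Gf g' ⁻¹' (Set.Icc (-B) c)ᶜ) = 0 := by
        intro n hn
        rw [Measure.dirac_apply' _ (hpm measurableSet_Icc.compl)]
        refine Set.indicator_of_notMem ?_ _
        intro hmem
        exact hmem ⟨(hpb _).1, hg' _ (hω n hn)⟩
      rw [Finset.sum_eq_zero hz]
      simp
    have hνprob : IsProbabilityMeasure (Measure.map (payoff F Gf g') (empMeas X N ω)) :=
      Measure.isProbabilityMeasure_map hpm.aemeasurable
    obtain ⟨Y, hYm, hYlaw⟩ := hstd _ hνprob
    set Y' : Ω' → ℝ := fun x => max (-B) (min (Y x) c) with hY'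
    have hY'm : Measurable Y' := measurable_const.max (hYm.min measurable_const)
    have hY'bdd : ∃ Cb, ∀ x, |Y' x| ≤ Cb := by
      refine ⟨|B| + |c|, fun x => abs_le.mpr ⟨?_, ?_⟩⟩
      · have h1 : -B ≤ Y' x := le_max_left _ _
        have h2 := le_abs_self B
        have h3 := abs_nonneg c
        linarith
      · have h1 : Y' x ≤ max (-B) c := max_le_max le_rfl (min_le_right _ _)
        have h2 : max (-B) c ≤ |B| + |c| := by
          refine max_le ?_ ?_
          · have := neg_abs_le B
            have := abs_nonneg c
            have := le_abs_self B
            linarith [neg_le_abs B]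
          · linarith [le_abs_self c, abs_nonneg B]
        linarith
    have hYae : Y' =ᵐ[P'] Y := by
      have h0 : P' (Y ⁻¹' (Set.Icc (-B) c)ᶜ) = 0 := by
        rw [← Measure.map_apply hYm measurableSet_Icc.compl, hYlaw]
        exact hνnull
      have hae : ∀ᵐ x ∂P', Y x ∈ Set.Icc (-B) c := by
        rw [ae_iff]
        exact h0
      filter_upwards [hae] with x hx
      simp only [hY']
      rw [min_eq_left hx.2, max_eq_right hx.1]
    have hmapeq : Measure.map Y' P' = Measure.map (payoff F Gf g') (empMeas X N ω) := by
      rw [Measure.map_congr hYae, hYlaw]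
    rw [← hmapeq, hρm Y' hY'm hY'bdd]
    have hconstρ : ρ (fun _ => c) = c := by
      have h := hρ_cash (fun _ => 0) measurable_const ⟨0, fun x => by simp⟩ c
      simpa [hρ_zero] using h
    calc ρ Y' ≤ ρ (fun _ => c) := by
          refine hρ_mono Y' _ hY'm measurable_const hY'bdd ⟨|c|, fun x => le_refl _⟩ ?_
          exact ae_of_all _ fun x => max_le hBc (min_le_right _ _)
      _ = c := hconstρ
  -- final contradiction
  obtain ⟨r, hr⟩ := hπreal
  have hev := (hconv.eventually_lt_const (show (0:ℝ≥0∞) < 1 by norm_num)).and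
    (eventually_ge_atTop 1)
  obtain ⟨N, hNlt, hN1⟩ := hev.exists
  -- (already beta-reduced)
  -- the event that all N samples lie in A
  set E : Set Ω := ⋂ n ∈ Finset.range N, X n ⁻¹' A with hE
  have hEmeas : MeasurableSet E :=
    Set.Finite.measurableSet_biInter (Finset.finite_toSet _) fun n _ => (hXmeas n) hAmeas
  have hPE : P E ≠ 0 := by
    rw [hE, hXindep.meas_biInter (fun n _ => ⟨A, hAmeas, rfl⟩)]
    refine Finset.prod_ne_zero_iff.mpr fun n _ => ?_
    rw [← Measure.map_apply (hXmeas n) hAmeas, hXlaw n]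
    exact hA
  have hint : (∫⁻ ω,
      ((⨅ g ∈ 𝒢, ((ρm (Measure.map (payoff F Gf g) μ) : ℝ) : EReal)) -
        (⨅ g ∈ 𝒢,
          ((ρm (Measure.map (payoff F Gf g) (empMeas X N ω)) : ℝ) : EReal))).abs ∂P) = ⊤ := by
    rw [eq_top_iff]
    calc (⊤ : ℝ≥0∞) = ⊤ * P E := (ENNReal.top_mul hPE).symm
      _ = ∫⁻ ω, E.indicator (fun _ => (⊤ : ℝ≥0∞)) ω ∂P := by
          rw [lintegral_indicator hEmeas, setLIntegral_const]
      _ ≤ _ := by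
          refine lintegral_mono fun ω => ?_
          by_cases hωE : ω ∈ E
          · rw [Set.indicator_of_mem hωE]
            have hωA : ∀ n ∈ Finset.range N, X n ω ∈ A := by
              intro n hn
              exact Set.mem_iInter₂.mp hωE n hn
            rw [hbot N hN1 ω hωA, hr, EReal.coe_sub_bot]
            simp
          · rw [Set.indicator_of_notMem hωE]
            exact zero_le
  rw [hint] at hNlt
  exact absurd hNlt (not_lt.mpr le_top)
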